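/- arXiv:1904.02506 — 4 statements merged into one kernel-verified Lean document; each statement's English description precedes it below -/
import Mathlib

section
/- Let T be a Hom-finite Krull-Schmidt R-linear triangulated category and let A → B →g C → ΣA be an Auslander-Reiten triangle in T. For any object U of T, the induced map g_* : Hom(U,B) → Hom(U,C) is surjective if and only if C is not a direct summand of U. -/
open CategoryTheory CategoryTheory.Limits CategoryTheory.Pretriangulated

universe v u

/-- The length of an `R`-module, defined as the Krull dimension of its submodule
lattice, truncated to a natural number (which recovers the usual length for
modules of finite length). -/
noncomputable def rlen (R : Type*) [Ring R] (M : Type*) [AddCommGroup M] [Module R M] : ℕ :=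
  (WithBot.unbotD 0 (Order.krullDim (Submodule R M))).toNat

section Additive

variable (C : Type u) [Category.{v} C] [Preadditive C] [HasBinaryBiproducts C]

/-- Hom-finiteness over `R`: every Hom-module has finite length. -/
def HomFinite (R : Type*) [CommRing R] [CategoryTheory.Linear R C] : Prop :=
  ∀ X Y : C, IsFiniteLength R (X ⟶ Y)

/-- A Krull-Schmidt category: every object is a finite biproduct of objects with
local endomorphism rings. -/
def KrullSchmidt [HasFiniteBiproducts C] : Prop :=
  ∀ X : C, ∃ (n : ℕ) (f : Fin n → C),
    Nonempty (X ≅ ⨁ f) ∧ ∀ i, IsLocalRing (End (f i))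

/-- `X` is a direct summand of `U`. -/
def IsDirectSummand {C : Type u} [Category.{v} C] [Preadditive C] [HasBinaryBiproducts C]
    (X U : C) : Prop :=
  ∃ Z : C, Nonempty (U ≅ X ⊞ Z)

/-- The free abelian group on isomorphism classes of objects of `C`. -/
def FreeK0 : Type _ := FreeAbelianGroup (Quotient (isIsomorphicSetoid C))

noncomputable instance : AddCommGroup (FreeK0 C) :=
  inferInstanceAs (AddCommGroup (FreeAbelianGroup _))

/-- The subgroup of split relations `[A ⊞ B] - [A] - [B]`. -/
noncomputable def splitSubgroup : AddSubgroup (FreeK0 C) :=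
  AddSubgroup.closure {x | ∃ A B : C,
    x = FreeAbelianGroup.of (Quotient.mk (isIsomorphicSetoid C) (A ⊞ B))
      - FreeAbelianGroup.of (Quotient.mk (isIsomorphicSetoid C) A)
      - FreeAbelianGroup.of (Quotient.mk (isIsomorphicSetoid C) B)}

/-- The split Grothendieck group `K₀(C,0)`. -/
noncomputable def K0 : Type _ := FreeK0 C ⧸ splitSubgroup C

noncomputable instance : AddCommGroup (K0 C) :=
  inferInstanceAs (AddCommGroup (_ ⧸ splitSubgroup C))

/-- The class `[X]` of an object `X` in `K₀(C,0)`. -/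
noncomputable def cls (X : C) : K0 C :=
  QuotientAddGroup.mk (FreeAbelianGroup.of (Quotient.mk (isIsomorphicSetoid C) X))

end Additive

section Triangulated

variable (C : Type u) [Category.{v} C] [Preadditive C] [HasZeroObject C]
  [HasShift C ℤ] [∀ n : ℤ, (shiftFunctor C n).Additive] [Pretriangulated C]
  [HasBinaryBiproducts C]

/-- An Auslander-Reiten triangle. -/
def IsARTriangle (T : Triangle C) : Prop :=
  (T ∈ distTriang C) ∧ Indecomposable T.obj₁ ∧ Indecomposable T.obj₃ ∧ T.mor₃ ≠ 0 ∧
    ∀ ⦃W : C⦄ (t : W ⟶ T.obj₃), ¬ IsSplitEpi t → ∃ t' : W ⟶ T.obj₂, t' ≫ T.mor₂ = t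

/-- The subgroup `Ex(C)` of `K₀(C,0)` generated by distinguished triangles. -/
noncomputable def ExSubgroup : AddSubgroup (K0 C) :=
  AddSubgroup.closure {x | ∃ T, (T ∈ distTriang C) ∧
    x = cls C T.obj₁ - cls C T.obj₂ + cls C T.obj₃}

/-- The subgroup `AR(C)` of `K₀(C,0)` generated by Auslander-Reiten triangles. -/
noncomputable def ARSubgroup : AddSubgroup (K0 C) :=
  AddSubgroup.closure {x | ∃ T, IsARTriangle C T ∧
    x = cls C T.obj₁ - cls C T.obj₂ + cls C T.obj₃}

end Triangulated

universe w

variable {R : Type w} [CommRing R]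
variable {C : Type u} [Category.{v} C] [Preadditive C] [CategoryTheory.Linear R C]
  [HasZeroObject C] [HasShift C ℤ] [∀ n : ℤ, (shiftFunctor C n).Additive]
  [Pretriangulated C] [HasFiniteBiproducts C] [EssentiallySmall.{v} C]
/-- In a Hom-finite Krull-Schmidt `R`-linear triangulated category, for an
Auslander-Reiten triangle `A ⟶ B ⟶g C ⟶ ΣA` and any object `U`, the induced map
`g_* : Hom(U,B) ⟶ Hom(U,C)` is surjective iff `C` is not a direct summand of `U`. -/
theorem ar_triangle_postcomp_surjective_iff
    (hfin : HomFinite C R) (hKS : KrullSchmidt C)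
    {A B Co : C} (f : A ⟶ B) (g : B ⟶ Co) (h : Co ⟶ A⟦(1 : ℤ)⟧)
    (hAR : IsARTriangle C (Triangle.mk f g h)) (U : C) :
    Function.Surjective (fun t : U ⟶ B => t ≫ g) ↔ ¬ IsDirectSummand Co U := by
  obtain ⟨hdist, _, _, hne, hfac⟩ := hAR
  constructor
  · intro hsurj ⟨Z, ⟨e⟩⟩
    obtain ⟨t, ht⟩ := hsurj (e.hom ≫ biprod.fst)
    simp only at ht
    have hg : (biprod.inl ≫ e.inv ≫ t) ≫ g = 𝟙 Co := by
      simp [Category.assoc, ht]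
    have hgh : g ≫ h = 0 := comp_distTriang_mor_zero₂₃ _ hdist
    apply hne
    calc h = ((biprod.inl ≫ e.inv ≫ t) ≫ g) ≫ h := by rw [hg, Category.id_comp]
    _ = 0 := by rw [Category.assoc, hgh, comp_zero]
  · intro hns t
    have hnse : ¬ IsSplitEpi t := by
      intro hse
      obtain ⟨K, k, w, mem⟩ := distinguished_cocone_triangle₁ t
      have hw : (Triangle.mk k t w).mor₃ = 0 := by
        have := comp_distTriang_mor_zero₂₃ _ mem
        change t ≫ w = 0 at this
        change w = 0
        calc w = (section_ t ≫ t) ≫ w := by rw [IsSplitEpi.id t, Category.id_comp]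
        _ = 0 := by rw [Category.assoc, this, comp_zero]
      obtain ⟨e, -, -⟩ := exists_iso_binaryBiproduct_of_distTriang _ mem hw
      exact hns ⟨K, ⟨e.trans (biprod.braiding _ _)⟩⟩
    obtain ⟨t', ht'⟩ := hfac t hnse
    exact ⟨t', ht'⟩
end

section
/- Let T be a Hom-finite Krull-Schmidt R-linear triangulated category, A →f B → C → ΣA an Auslander-Reiten triangle in T, and U an indecomposable object of T. Then the induced map f_* : Hom(U,A) → Hom(U,B) is injective if and only if U is not isomorphic to Σ⁻¹C. -/
open CategoryTheory CategoryTheory.Limits CategoryTheory.Pretriangulated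

universe v u

universe w

variable {R : Type w} [CommRing R]
variable {C : Type u} [Category.{v} C] [Preadditive C] [CategoryTheory.Linear R C]
  [HasZeroObject C] [HasShift C ℤ] [∀ n : ℤ, (shiftFunctor C n).Additive]
  [Pretriangulated C] [HasFiniteBiproducts C] [EssentiallySmall.{v} C]
/-- An additive endofunctor maps binary biproducts to binary biproducts. -/
noncomputable def mapBiprodIso (F : C ⥤ C) [F.Additive] (Y Z : C) :
    F.obj (Y ⊞ Z) ≅ F.obj Y ⊞ F.obj Z where
  hom := biprod.lift (F.map biprod.fst) (F.map biprod.snd)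
  inv := biprod.desc (F.map biprod.inl) (F.map biprod.inr)
  hom_inv_id := by
    rw [biprod.lift_desc, ← F.map_comp, ← F.map_comp, ← F.map_add, biprod.total, F.map_id]
  inv_hom_id := by
    ext <;> simp [← F.map_comp]

/-- An additive equivalence-like functor (here a shift) preserves indecomposability. -/
lemma indecomposable_shift (U : C) (hU : Indecomposable U) (n : ℤ) :
    Indecomposable ((shiftFunctor C n).obj U) := by
  constructor
  · intro hz
    exact hU.1 ((((shiftEquiv C n).unitIso.app U).isZero_iff).2
      ((shiftFunctor C (-n)).map_isZero hz))
  · intro Y Z e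
    have eU : U ≅ (shiftFunctor C (-n)).obj Y ⊞ (shiftFunctor C (-n)).obj Z :=
      (shiftEquiv C n).unitIso.app U ≪≫ (shiftFunctor C (-n)).mapIso e ≪≫
        mapBiprodIso (shiftFunctor C (-n)) Y Z
    rcases hU.2 _ _ eU with hY | hZ
    · exact Or.inl ((((shiftEquiv C n).counitIso.app Y).symm.isZero_iff).2
        ((shiftFunctor C n).map_isZero hY))
    · exact Or.inr ((((shiftEquiv C n).counitIso.app Z).symm.isZero_iff).2
        ((shiftFunctor C n).map_isZero hZ))

/-- In a pretriangulated category, a split epimorphism from an indecomposable object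
to a nonzero object is an isomorphism. -/
lemma isIso_of_isSplitEpi_indecomposable {X Y : C} (s : X ⟶ Y) (hs : IsSplitEpi s)
    (hX : Indecomposable X) (hY : ¬ IsZero Y) : IsIso s := by
  obtain ⟨⟨σ, hσ⟩⟩ := hs
  obtain ⟨Z, p, q, hT⟩ := Pretriangulated.distinguished_cocone_triangle σ
  have hmono : Mono σ := (IsSplitMono.mk' ⟨s, hσ⟩).mono
  have h0 : (Triangle.mk σ p q).mor₃ = 0 :=
    Pretriangulated.Triangle.mor₃_eq_zero_of_mono₁ _ hT hmono
  obtain ⟨e, he₁, he₂⟩ :=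
    Pretriangulated.exists_iso_binaryBiproduct_of_distTriang _ hT h0
  rcases hX.2 _ _ e with hYz | hZ
  · exact absurd hYz hY
  · have hinl : IsIso (biprod.inl :
        (Triangle.mk σ p q).obj₁ ⟶ (Triangle.mk σ p q).obj₁ ⊞ (Triangle.mk σ p q).obj₃) := by
      rw [biprod.isIso_inl_iff_id_eq_fst_comp_inl]
      apply biprod.hom_ext
      · simp
      · exact hZ.eq_of_tgt _ _
    have hσe : σ = biprod.inl ≫ e.inv := by
      exact (Iso.eq_comp_inv e).2 he₁
    have hiso : IsIso σ := by rw [hσe]; exact IsIso.comp_isIso' hinl (Iso.isIso_inv e)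
    have : s = inv σ := by rw [← IsIso.inv_eq_of_hom_inv_id hσ]
    rw [this]; infer_instance

/-- In a Hom-finite Krull-Schmidt `R`-linear triangulated category, for an
Auslander-Reiten triangle `A ⟶f B ⟶ C ⟶ ΣA` and an indecomposable object `U`, the
induced map `f_* : Hom(U,A) ⟶ Hom(U,B)` is injective iff `U ≇ Σ⁻¹C`. -/
theorem ar_triangle_postcomp_injective_iff
    (hfin : HomFinite C R) (hKS : KrullSchmidt C)
    {A B Co : C} (f : A ⟶ B) (g : B ⟶ Co) (h : Co ⟶ A⟦(1 : ℤ)⟧)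
    (hAR : IsARTriangle C (Triangle.mk f g h)) (U : C) (hU : Indecomposable U) :
    Function.Injective (fun t : U ⟶ A => t ≫ f) ↔
      ¬ Nonempty (U ≅ (shiftFunctor C (-1 : ℤ)).obj Co) := by
  obtain ⟨hDT, hAind, hCind, hne, hfac⟩ := hAR
  have hT' := Pretriangulated.inv_rot_of_distTriang _ hDT
  constructor
  · rintro hinj ⟨φ⟩
    have h12 : (Triangle.mk f g h).invRotate.mor₁ ≫ f = 0 :=
      Pretriangulated.comp_distTriang_mor_zero₁₂ _ hT'
    have hw : (φ.hom ≫ (Triangle.mk f g h).invRotate.mor₁) ≫ f = (0 : U ⟶ A) ≫ f := by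
      erw [Category.assoc, h12, comp_zero, zero_comp]
    have h1 : φ.hom ≫ (Triangle.mk f g h).invRotate.mor₁ = 0 := hinj hw
    have h2 : (Triangle.mk f g h).invRotate.mor₁ = 0 := by
      erw [← cancel_epi φ.hom, h1, comp_zero]
    simp only [Triangle.invRotate_mor₁, Preadditive.neg_comp, Preadditive.comp_neg,
      neg_eq_zero] at h2
    apply hne
    have h3 : (shiftFunctor C (-1 : ℤ)).map h = 0 := by
      erw [← cancel_mono ((shiftEquiv C (1 : ℤ)).unitIso.inv.app A), zero_comp]
      exact neg_eq_zero.mp h2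
    exact (shiftFunctor C (-1 : ℤ)).map_injective (by rw [Functor.map_zero]; exact h3)
  · intro hniso u v huv
    simp only at huv
    have hw : (u - v) ≫ f = 0 := by rw [Preadditive.sub_comp, huv, sub_self]
    obtain ⟨t, ht⟩ := Pretriangulated.Triangle.coyoneda_exact₂ _ hT' (u - v) hw
    -- `t : U ⟶ Co⟦-1⟧`
    set s : (shiftFunctor C (1 : ℤ)).obj U ⟶ Co :=
      (shiftFunctor C (1 : ℤ)).map t ≫ (shiftEquiv C (1 : ℤ)).counitIso.hom.app Co with hs
    have hsne : ¬ IsSplitEpi s := by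
      intro hsplit
      have := isIso_of_isSplitEpi_indecomposable s hsplit
        (indecomposable_shift U hU 1) hCind.1
      exact hniso ⟨(shiftEquiv C (1 : ℤ)).unitIso.app U ≪≫
        (shiftFunctor C (-1 : ℤ)).mapIso (@asIso _ _ _ _ s this)⟩
    obtain ⟨t', ht'⟩ := hfac s hsne
    have h23 : (Triangle.mk f g h).mor₂ ≫ h = 0 :=
      Pretriangulated.comp_distTriang_mor_zero₂₃ _ hDT
    have hsh : s ≫ h = 0 := by
      erw [← ht', Category.assoc, h23, comp_zero]
    -- deduce `t ≫ h⟦-1⟧' = 0`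
    have hkey : s ≫ h = (shiftFunctor C (1 : ℤ)).map (t ≫ (shiftFunctor C (-1 : ℤ)).map h) ≫
        (shiftEquiv C (1 : ℤ)).counitIso.hom.app ((shiftFunctor C (1 : ℤ)).obj A) := by
      rw [hs]
      exact (Category.assoc _ _ _).trans ((congrArg (fun x => (shiftFunctor C (1 : ℤ)).map t ≫ x)
        ((shiftEquiv C (1 : ℤ)).counitIso.hom.naturality h).symm).trans ((Category.assoc _ _ _).symm.trans
        (congrArg (fun x => x ≫ (shiftEquiv C (1 : ℤ)).counitIso.hom.app ((shiftFunctor C (1 : ℤ)).obj A))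
        ((shiftFunctor C (1 : ℤ)).map_comp t ((shiftFunctor C (-1 : ℤ)).map h)).symm)))
    have h5 : (shiftFunctor C (1 : ℤ)).map (t ≫ (shiftFunctor C (-1 : ℤ)).map h) = 0 := by
      erw [← cancel_mono ((shiftEquiv C (1 : ℤ)).counitIso.hom.app
        ((shiftFunctor C (1 : ℤ)).obj A)), zero_comp, ← hkey, hsh]
    have hth : t ≫ (shiftFunctor C (-1 : ℤ)).map h = 0 :=
      (shiftFunctor C (1 : ℤ)).map_injective (by rw [h5, Functor.map_zero])
    have hzero : u - v = 0 := by
      rw [ht]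
      simp only [Triangle.invRotate_mor₁, Triangle.mk_mor₃, Triangle.mk_obj₁,
        Preadditive.neg_comp, Preadditive.comp_neg, neg_eq_zero, ← Category.assoc]
      erw [Preadditive.comp_neg, neg_eq_zero, ← Category.assoc, hth, zero_comp]
      rfl
    rw [sub_eq_zero] at hzero
    exact hzero
end

section
/- Let T be a Hom-finite Krull-Schmidt R-linear triangulated category in which the subgroup Ex(T) of K₀(T,0) generated by [X] − [Y] + [Z] over all distinguished triangles X → Y → Z → ΣX equals the subgroup AR(T) generated by such elements coming from Auslander-Reiten triangles. If there exists an object X in T such that Hom(Y,X) ≠ 0 for every non-zero object Y, then T has only finitely many isomorphism classes of indecomposable objects. -/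
open CategoryTheory CategoryTheory.Limits CategoryTheory.Pretriangulated

universe v u

section LengthTheory

section MLen

variable (R : Type*) [Ring R]

/-- Length of a module as height of `⊤` in the submodule lattice. -/
noncomputable def mlen (M : Type*) [AddCommGroup M] [Module R M] : ℕ∞ :=
  Order.height (⊤ : Submodule R M)

variable {R}
variable {M N P : Type*} [AddCommGroup M] [Module R M] [AddCommGroup N] [Module R N]
  [AddCommGroup P] [Module R P]

lemma mlen_eq_coheight : mlen R M = Order.coheight (⊥ : Submodule R M) := by
  apply le_antisymm
  · apply Order.height_le
    intro p hp
    exact Order.length_le_coheight bot_le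
  · apply Order.coheight_le
    intro p hp
    exact Order.length_le_height le_top

lemma mlen_eq_zero_iff : mlen R M = 0 ↔ Subsingleton M := by
  rw [mlen, Order.height_eq_zero]
  constructor
  · intro h
    have : (⊤ : Submodule R M) ≤ ⊥ := h bot_le
    exact subsingleton_iff_forall_eq 0 |>.mpr fun y =>
      (Submodule.mem_bot R).mp (this Submodule.mem_top)
  · intro h
    intro b _
    exact le_of_eq (Subsingleton.elim _ _)

lemma mlen_congr (e : M ≃ₗ[R] N) : mlen R M = mlen R N := by
  have h := Order.height_orderIso (Submodule.orderIsoMapComap e) ⊤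
  rw [mlen, mlen, ← h]
  congr 1
  simp [Submodule.orderIsoMapComap, Submodule.orderIsoMapComapOfBijective]

/-- Key step: two submodules with same comap and map agree. -/
lemma eq_of_comap_map_eq (f : M →ₗ[R] N) (g : N →ₗ[R] P)
    (hk : LinearMap.ker g ≤ LinearMap.range f) {T T' : Submodule R N} (hle : T ≤ T')
    (h1 : T.comap f = T'.comap f) (h2 : T.map g = T'.map g) : T = T' := by
  refine le_antisymm hle fun x hx => ?_
  have : g x ∈ T.map g := by rw [h2]; exact Submodule.mem_map_of_mem hx
  obtain ⟨y, hy, hgy⟩ := this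
  have hxy : x - y ∈ LinearMap.ker g := by simp [LinearMap.mem_ker, map_sub, hgy]
  obtain ⟨z, hz⟩ := hk hxy
  have hzT' : z ∈ T'.comap f := by
    simp only [Submodule.mem_comap, hz]
    exact sub_mem hx (hle hy)
  rw [← h1] at hzT'
  have : f z ∈ T := hzT'
  have := add_mem hy this
  rwa [hz, add_sub_cancel] at this

lemma mlen_le_of_ker_le_range (f : M →ₗ[R] N) (g : N →ₗ[R] P)
    (hk : LinearMap.ker g ≤ LinearMap.range f) :
    mlen R N ≤ mlen R M + mlen R P := by
  have key : ∀ p : LTSeries (Submodule R N),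
      (p.length : ℕ∞) ≤ Order.height (p.last.comap f) + Order.height (p.last.map g) := by
    suffices h : ∀ (n : ℕ) (p : LTSeries (Submodule R N)), p.length = n →
        (p.length : ℕ∞) ≤ Order.height (p.last.comap f) + Order.height (p.last.map g) by
      intro p; exact h p.length p rfl
    intro n
    induction n with
    | zero => intro p hp; rw [hp]; simp
    | succ n ih =>
        intro q hq
        set p := q.eraseLast with hpdef
        set x := q.last with hxdef
        have hplen : p.length = n := by simp [hpdef, RelSeries.eraseLast, hq]
        have hlt : p.last < x := q.eraseLast_last_rel_last (by omega)
        have hle := hlt.le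
        have hcm : p.last.comap f ≤ x.comap f := Submodule.comap_mono hle
        have hmm : p.last.map g ≤ x.map g := Submodule.map_mono hle
        have hdich : p.last.comap f < x.comap f ∨ p.last.map g < x.map g := by
          rcases hcm.lt_or_eq with h | h
          · exact Or.inl h
          · rcases hmm.lt_or_eq with h' | h'
            · exact Or.inr h'
            · exact absurd (eq_of_comap_map_eq f g hk hle h h') hlt.ne
        have hih := ih p hplen
        rw [hplen] at hih
        have hlen : ((q.length : ℕ) : ℕ∞) = (n : ℕ∞) + 1 := by
          rw [hq]; push_cast; ring
        rw [hlen]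
        rcases hdich with h | h
        · calc (n : ℕ∞) + 1
              ≤ (Order.height (p.last.comap f) + Order.height (p.last.map g)) + 1 := by
                exact add_le_add hih le_rfl
            _ ≤ Order.height (x.comap f) + Order.height (x.map g) := by
                rw [add_right_comm]
                gcongr
                · by_cases htop : Order.height (p.last.comap f) = ⊤
                  · have : Order.height (x.comap f) = ⊤ :=
                      top_le_iff.mp (htop ▸ Order.height_mono h.le)
                    simp [this]
                  · rw [ENat.add_one_le_iff htop]
                    exact Order.height_strictMono h (lt_top_iff_ne_top.mpr htop)
        · calc (n : ℕ∞) + 1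
              ≤ (Order.height (p.last.comap f) + Order.height (p.last.map g)) + 1 := by
                exact add_le_add hih le_rfl
            _ ≤ Order.height (x.comap f) + Order.height (x.map g) := by
                rw [add_assoc]
                gcongr
                by_cases htop : Order.height (p.last.map g) = ⊤
                · have : Order.height (x.map g) = ⊤ :=
                    top_le_iff.mp (htop ▸ Order.height_mono h.le)
                  simp [this]
                · rw [ENat.add_one_le_iff htop]
                  exact Order.height_strictMono h (lt_top_iff_ne_top.mpr htop)
  apply Order.height_le
  intro p hp
  refine (key p).trans ?_
  rw [hp]
  gcongr <;> [exact Order.height_mono le_top; exact Order.height_mono le_top]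

end MLen

section MLen2

variable {R : Type*} [Ring R]
variable {M N P : Type*} [AddCommGroup M] [Module R M] [AddCommGroup N] [Module R N]
  [AddCommGroup P] [Module R P]

lemma mlen_ge_of_exact (f : M →ₗ[R] N) (g : N →ₗ[R] P)
    (hf : Function.Injective f) (hg : Function.Surjective g)
    (hk : LinearMap.ker g = LinearMap.range f) :
    mlen R M + mlen R P ≤ mlen R N := by
  have claim : ∀ (n m : ℕ), (n : ℕ∞) ≤ mlen R M → (m : ℕ∞) ≤ mlen R P →
      ((n + m : ℕ) : ℕ∞) ≤ mlen R N := by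
    intro n m hn hm
    obtain ⟨p, hplast, hplen⟩ := Order.exists_series_of_le_height _ hn
    rw [mlen_eq_coheight] at hm
    obtain ⟨q, qhead, hqlen⟩ := Order.exists_series_of_le_coheight _ hm
    let p' := p.map (Submodule.map f) (Submodule.map_strictMono_of_injective hf)
    let q' := q.map (Submodule.comap g) (Submodule.comap_strictMono_of_surjective hg)
    have conn : p'.last = q'.head := by
      show Submodule.map f p.last = Submodule.comap g q.head
      rw [hplast, qhead, Submodule.map_top, Submodule.comap_bot, hk]
    have := Order.length_le_height (x := (⊤ : Submodule R N))
      (p := RelSeries.smash p' q' conn) le_top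
    simpa [RelSeries.smash, p', q', hplen, hqlen, mlen] using this
  have ctop : ∀ {a b c : ℕ∞}, (∀ (n m : ℕ), (n:ℕ∞) ≤ a → (m:ℕ∞) ≤ b →
      ((n+m:ℕ):ℕ∞) ≤ c) → a + b ≤ c := by
    intro a b c h
    by_cases hc : c = ⊤
    · simp [hc]
    · obtain ⟨k, rfl⟩ := WithTop.ne_top_iff_exists.mp hc
      by_cases ha : a = ⊤
      · exfalso
        have := h (k+1) 0 (by simp [ha]) (by simp)
        simp only [Nat.add_zero] at this
        exact absurd (Nat.cast_le.mp this) (by omega)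
      · by_cases hb : b = ⊤
        · exfalso
          have := h 0 (k+1) (by simp) (by simp [hb])
          simp only [Nat.zero_add] at this
          exact absurd (Nat.cast_le.mp this) (by omega)
        · obtain ⟨na, rfl⟩ := WithTop.ne_top_iff_exists.mp ha
          obtain ⟨nb, rfl⟩ := WithTop.ne_top_iff_exists.mp hb
          have := h na nb le_rfl le_rfl
          push_cast at this ⊢
          exact this
  exact ctop claim

end MLen2

section MLen3

variable {R : Type*} [Ring R]
variable {M N P : Type*} [AddCommGroup M] [Module R M] [AddCommGroup N] [Module R N]
  [AddCommGroup P] [Module R P]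

lemma mlen_eq_of_exact (f : M →ₗ[R] N) (g : N →ₗ[R] P)
    (hf : Function.Injective f) (hg : Function.Surjective g)
    (hk : LinearMap.ker g = LinearMap.range f) :
    mlen R N = mlen R M + mlen R P :=
  le_antisymm (mlen_le_of_ker_le_range f g hk.le) (mlen_ge_of_exact f g hf hg hk)

lemma mlen_ne_top_of_isFiniteLength (h : IsFiniteLength R M) : mlen R M ≠ ⊤ := by
  induction h with
  | of_subsingleton =>
      rename_i M' _ _ hs
      rw [mlen_eq_zero_iff.mpr hs]
      simp
  | of_simple_quotient h ih =>
      rename_i M' _ _ S _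
      have hle : mlen R M' ≤ mlen R S + mlen R (M' ⧸ S) :=
        mlen_le_of_ker_le_range (S.subtype) (S.mkQ)
          (by rw [Submodule.ker_mkQ, Submodule.range_subtype])
      have hsimple : mlen R (M' ⧸ S) ≤ 1 := by
        show Order.height (⊤ : Submodule R (M' ⧸ S)) ≤ ((1 : ℕ) : ℕ∞)
        rw [Order.height_le_coe_iff]
        intro y hy
        have : y = ⊥ := by
          rcases (IsSimpleOrder.eq_bot_or_eq_top y) with h' | h'
          · exact h'
          · exact absurd h' hy.ne
        rw [this]
        simp
      intro htop
      rw [htop] at hle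
      obtain ⟨n, hn⟩ := WithTop.ne_top_iff_exists.mp ih
      have h2 : mlen R (M' ⧸ S) ≠ ⊤ := by
        intro ht
        rw [ht] at hsimple
        exact absurd hsimple (by simp)
      obtain ⟨m, hm⟩ := WithTop.ne_top_iff_exists.mp h2
      rw [← hn, ← hm] at hle
      have : ((n : ℕ∞) + (m : ℕ∞)) ≠ ⊤ := by
        exact ENat.coe_ne_top (n + m)
      exact this (top_le_iff.mp hle)

lemma one_le_mlen_of_nontrivial (h : ¬ Subsingleton M) : 1 ≤ mlen R M := by
  rw [ENat.one_le_iff_ne_zero]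
  intro h0
  exact h (mlen_eq_zero_iff.mp h0)

end MLen3

end LengthTheory

universe w

variable {R : Type w} [CommRing R]
variable {C : Type u} [Category.{v} C] [Preadditive C] [CategoryTheory.Linear R C]
  [HasZeroObject C] [HasShift C ℤ] [∀ n : ℤ, (shiftFunctor C n).Additive]
  [Pretriangulated C] [HasFiniteBiproducts C] [EssentiallySmall.{v} C]
section AuxCat

lemma isLocalRing_of_ringEquiv {A B : Type*} [Ring A] [Ring B] (e : A ≃+* B)
    (h : IsLocalRing A) : IsLocalRing B := by
  haveI : Nontrivial B := e.symm.toEquiv.nontrivial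
  refine ⟨fun {a b} hab => ?_⟩
  have : e.symm a + e.symm b = 1 := by
    rw [← map_add, hab, map_one]
  rcases IsLocalRing.isUnit_or_isUnit_of_add_one this with h' | h'
  · exact Or.inl (by simpa using h'.map (e : A →+* B))
  · exact Or.inr (by simpa using h'.map (e : A →+* B))

variable {C : Type u} [Category.{v} C] [Preadditive C]

lemma subsingleton_end_of_isZero {Z : C} (h : IsZero Z) : Subsingleton (End Z) :=
  ⟨fun a b => h.eq_of_src a b⟩

lemma not_isZero_of_isLocalRing_end {Z : C} (h : IsLocalRing (End Z)) : ¬ IsZero Z := by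
  intro hz
  haveI := subsingleton_end_of_isZero hz
  exact false_of_nontrivial_of_subsingleton (End Z)

/-- Transport `End` along an isomorphism, as a ring isomorphism. -/
noncomputable def endRingEquivOfIso {X Y : C} (e : X ≅ Y) : End X ≃+* End Y where
  toFun g := e.inv ≫ g ≫ e.hom
  invFun g := e.hom ≫ g ≫ e.inv
  left_inv g := by simp
  right_inv g := by simp
  map_add' a b := by
    show e.inv ≫ (a + b) ≫ e.hom = e.inv ≫ a ≫ e.hom + e.inv ≫ b ≫ e.hom
    rw [Preadditive.add_comp, Preadditive.comp_add]
  map_mul' a b := by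
    simp only [End.mul_def, Category.assoc, Iso.hom_inv_id_assoc]

section Biprod

variable [HasFiniteBiproducts C]

attribute [local instance] CategoryTheory.Limits.hasBinaryBiproducts_of_finite_biproducts

lemma isZero_component_of_isZero_biproduct {n : ℕ} (f : Fin n → C) (h : IsZero (⨁ f))
    (i : Fin n) : IsZero (f i) := by
  rw [IsZero.iff_id_eq_zero]
  have h0 : 𝟙 (⨁ f) = 0 := h.eq_of_src _ _
  calc 𝟙 (f i) = biproduct.ι f i ≫ biproduct.π f i := by simp
    _ = biproduct.ι f i ≫ 𝟙 (⨁ f) ≫ biproduct.π f i := by simp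
    _ = 0 := by rw [h0]; simp

/-- The biproduct over `Fin 1`. -/
noncomputable def biproductFinOne (f : Fin 1 → C) : ⨁ f ≅ f 0 where
  hom := biproduct.π f 0
  inv := biproduct.ι f 0
  hom_inv_id := by
    apply biproduct.hom_ext'
    intro j
    fin_cases j
    simp
  inv_hom_id := by simp

/-- Splitting off the first summand of a finite biproduct. -/
noncomputable def biproductFinSucc {m : ℕ} (f : Fin (m+1) → C) :
    ⨁ f ≅ f 0 ⊞ ⨁ (fun i : Fin m => f i.succ) where
  hom := biprod.lift (biproduct.π f 0) (biproduct.lift fun j => biproduct.π f j.succ)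
  inv := biprod.desc (biproduct.ι f 0) (biproduct.desc fun j => biproduct.ι f j.succ)
  hom_inv_id := by
    rw [biprod.lift_desc, biproduct.lift_desc, ← biproduct.total, Fin.sum_univ_succ]
  inv_hom_id := by
    apply biprod.hom_ext'
    · apply biprod.hom_ext
      · simp
      · simp only [Category.assoc, biprod.inl_desc_assoc, biprod.lift_snd, biprod.inl_snd]
        apply biproduct.hom_ext
        intro j
        simp [biproduct.ι_π_ne _ (Fin.succ_ne_zero j).symm]
    · apply biprod.hom_ext
      · simp only [Category.assoc, biprod.inr_desc_assoc, biprod.lift_fst, biprod.inr_fst]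
        apply biproduct.hom_ext'
        intro j
        simp [biproduct.ι_π_ne _ (Fin.succ_ne_zero j)]
      · simp only [Category.assoc, biprod.inr_desc_assoc, biprod.lift_snd, biprod.inr_snd,
          Category.comp_id]
        apply biproduct.hom_ext'
        intro j
        apply biproduct.hom_ext
        intro k
        by_cases hjk : j = k
        · subst hjk
          simp
        · simp [biproduct.ι_π_ne _ hjk, biproduct.ι_π_ne _ (fun h => hjk (Fin.succ_injective _ h))]

lemma end_isLocalRing_of_indecomposable (hKS : KrullSchmidt C) {Y : C}
    (hY : Indecomposable Y) : IsLocalRing (End Y) := by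
  obtain ⟨n, f, ⟨e⟩, hloc⟩ := hKS Y
  match n with
  | 0 =>
      exfalso
      apply hY.1
      have hz : IsZero (⨁ f) := by
        rw [IsZero.iff_id_eq_zero]
        apply biproduct.hom_ext
        intro j
        exact j.elim0
      exact hz.of_iso e
  | 1 =>
      exact isLocalRing_of_ringEquiv (endRingEquivOfIso (e.trans (biproductFinOne f)).symm)
        (hloc 0)
  | (m+2) =>
      exfalso
      have e2 := e.trans (biproductFinSucc f)
      rcases hY.2 _ _ e2 with h | h
      · exact not_isZero_of_isLocalRing_end (hloc 0) h
      · exact not_isZero_of_isLocalRing_end (hloc (Fin.succ 0))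
          (isZero_component_of_isZero_biproduct _ h 0)

lemma nonempty_iso_of_splitEpi (hKS : KrullSchmidt C) {Y Z : C}
    (hY : Indecomposable Y) (hZ : ¬ IsZero Z) (t : Y ⟶ Z) (s : Z ⟶ Y)
    (hst : s ≫ t = 𝟙 Z) : Nonempty (Y ≅ Z) := by
  haveI hloc := end_isLocalRing_of_indecomposable hKS hY
  set q : End Y := t ≫ s with hq
  have hidem : q * q = q := by
    rw [End.mul_def]
    rw [hq]
    rw [Category.assoc, ← Category.assoc s, hst]
    simp
  have hsum : q + (1 - q) = 1 := by
    rw [add_sub_cancel]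
  rcases IsLocalRing.isUnit_or_isUnit_of_add_one hsum with hu | hu
  · have hq1 : q = 1 := by
      refine hu.mul_left_cancel ?_
      rw [mul_one]
      exact hidem
    refine ⟨⟨t, s, ?_, hst⟩⟩
    have : (1 : End Y) = 𝟙 Y := End.one_def
    rw [← this, ← hq1, hq]
  · exfalso
    have hq0 : q = 0 := by
      have h1 : (1 - q) * q = (1 - q) * 0 := by
        rw [mul_zero, sub_mul, one_mul, hidem, sub_self]
      exact hu.mul_left_cancel h1
    apply hZ
    rw [IsZero.iff_id_eq_zero]
    have : 𝟙 Z = s ≫ t := hst.symm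
    calc 𝟙 Z = (s ≫ t) ≫ (s ≫ t) := by rw [hst]; simp
      _ = s ≫ (t ≫ s) ≫ t := by simp
      _ = s ≫ (0 : Y ⟶ Y) ≫ t := by rw [show t ≫ s = (0 : Y ⟶ Y) from hq0]
      _ = 0 := by simp

end Biprod

end AuxCat

section K0Aux

variable {C : Type u} [Category.{v} C] [Preadditive C] [HasBinaryBiproducts C]

lemma cls_congr {A B : C} (e : A ≅ B) : cls C A = cls C B := by
  unfold cls
  congr 1
  exact congrArg _ (Quotient.sound ⟨e⟩)

lemma cls_biprod (A B : C) : cls C (A ⊞ B) = cls C A + cls C B := by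
  have hmem : FreeAbelianGroup.of (Quotient.mk (isIsomorphicSetoid C) (A ⊞ B))
      - FreeAbelianGroup.of (Quotient.mk (isIsomorphicSetoid C) A)
      - FreeAbelianGroup.of (Quotient.mk (isIsomorphicSetoid C) B) ∈ splitSubgroup C :=
    AddSubgroup.subset_closure ⟨A, B, rfl⟩
  have h0 : (QuotientAddGroup.mk (s := splitSubgroup C)
      (FreeAbelianGroup.of (Quotient.mk (isIsomorphicSetoid C) (A ⊞ B))
        - FreeAbelianGroup.of (Quotient.mk (isIsomorphicSetoid C) A)
        - FreeAbelianGroup.of (Quotient.mk (isIsomorphicSetoid C) B))) = 0 :=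
    (QuotientAddGroup.eq_zero_iff _).mpr hmem
  erw [QuotientAddGroup.mk_sub, QuotientAddGroup.mk_sub, sub_sub, sub_eq_zero] at h0
  exact h0

lemma cls_isZero {Z : C} (h : IsZero Z) : cls C Z = 0 := by
  have hbz : IsZero (Z ⊞ Z) := by
    rw [IsZero.iff_id_eq_zero, ← biprod.total,
      h.eq_of_tgt (biprod.fst : Z ⊞ Z ⟶ Z) 0, h.eq_of_tgt (biprod.snd : Z ⊞ Z ⟶ Z) 0]
    simp
  have e : Z ⊞ Z ≅ Z := hbz.iso h
  have h1 : cls C Z = cls C Z + cls C Z := by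
    rw [← cls_biprod, cls_congr e]
  exact (left_eq_add.mp h1)

end K0Aux

section PhiDef

variable (R : Type w) [CommRing R]
variable {C : Type u} [Category.{v} C] [Preadditive C] [CategoryTheory.Linear R C]
  [HasBinaryBiproducts C]

/-- Length of `Hom(Y, M)` over `R`, as a natural number. -/
noncomputable def nhlen (Y M : C) : ℕ := (mlen R (Y ⟶ M)).toNat

/-- Post-composition with an isomorphism, as a linear equivalence. -/
noncomputable def homCongrRight (Y : C) {A B : C} (e : A ≅ B) :
    (Y ⟶ A) ≃ₗ[R] (Y ⟶ B) :=
  LinearEquiv.ofLinear (Linear.rightComp R Y e.hom) (Linear.rightComp R Y e.inv)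
    (by ext u; simp) (by ext u; simp)

lemma mlen_hom_congr (Y : C) {A B : C} (e : A ≅ B) :
    mlen R (Y ⟶ A) = mlen R (Y ⟶ B) :=
  mlen_congr (homCongrRight R Y e)

lemma nhlen_congr (Y : C) {A B : C} (e : A ≅ B) : nhlen R Y A = nhlen R Y B := by
  unfold nhlen
  rw [mlen_hom_congr R Y e]

lemma mlen_hom_biprod (Y A B : C) :
    mlen R (Y ⟶ A ⊞ B) = mlen R (Y ⟶ A) + mlen R (Y ⟶ B) := by
  refine mlen_eq_of_exact (Linear.rightComp R Y (biprod.inl : A ⟶ A ⊞ B))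
    (Linear.rightComp R Y (biprod.snd : A ⊞ B ⟶ B)) ?_ ?_ ?_
  · intro u v huv
    simp only [Linear.rightComp_apply] at huv
    calc u = (u ≫ biprod.inl) ≫ biprod.fst := by simp
      _ = (v ≫ biprod.inl) ≫ biprod.fst := by rw [huv]
      _ = v := by simp
  · intro k
    exact ⟨k ≫ biprod.inr, by simp⟩
  · ext u
    simp only [LinearMap.mem_ker, LinearMap.mem_range, Linear.rightComp_apply]
    constructor
    · intro h
      refine ⟨u ≫ biprod.fst, ?_⟩
      have : u ≫ 𝟙 (A ⊞ B) = u := Category.comp_id u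
      rw [← biprod.total, Preadditive.comp_add, ← Category.assoc, ← Category.assoc, h,
        zero_comp, add_zero] at this
      exact this
    · rintro ⟨v, rfl⟩
      rw [Category.assoc, biprod.inl_snd, comp_zero]

/-- The additive map `FreeK0 C →+ ℤ` given by length of `Hom(Y,-)`. -/
noncomputable def phiFree (Y : C) : FreeK0 C →+ ℤ :=
  FreeAbelianGroup.lift (Quotient.lift (fun M => (nhlen R Y M : ℤ))
    (fun A B hAB => by
      obtain ⟨e⟩ := hAB
      exact congrArg (fun n : ℕ => (n : ℤ)) (nhlen_congr R Y e)))

lemma phiFree_of (Y M : C) :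
    phiFree R Y (FreeAbelianGroup.of (Quotient.mk (isIsomorphicSetoid C) M))
      = (nhlen R Y M : ℤ) := by
  exact FreeAbelianGroup.lift_apply_of _ _

/-- The additive map `K0 C →+ ℤ` given by length of `Hom(Y,-)`. -/
noncomputable def phiK (hfin : HomFinite C R) (Y : C) : K0 C →+ ℤ :=
  QuotientAddGroup.lift (splitSubgroup C) (phiFree R Y) (by
    rw [splitSubgroup]
    rw [AddSubgroup.closure_le]
    rintro x ⟨A, B, rfl⟩
    erw [SetLike.mem_coe, AddMonoidHom.mem_ker, map_sub, map_sub, phiFree_of, phiFree_of, phiFree_of]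
    have hA : mlen R (Y ⟶ A) ≠ ⊤ := mlen_ne_top_of_isFiniteLength (hfin Y A)
    have hB : mlen R (Y ⟶ B) ≠ ⊤ := mlen_ne_top_of_isFiniteLength (hfin Y B)
    have h : nhlen R Y (A ⊞ B) = nhlen R Y A + nhlen R Y B := by
      unfold nhlen
      rw [mlen_hom_biprod, ENat.toNat_add hA hB]
    rw [h]
    push_cast
    ring)

lemma phiK_cls (hfin : HomFinite C R) (Y M : C) :
    phiK R hfin Y (cls C M) = (nhlen R Y M : ℤ) := by
  have h : phiK R hfin Y (cls C M)
      = phiFree R Y (FreeAbelianGroup.of (Quotient.mk (isIsomorphicSetoid C) M)) := rfl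
  rw [h]
  exact phiFree_of R Y M

end PhiDef

section Vanish

variable {R : Type w} [CommRing R]
variable {C : Type u} [Category.{v} C] [Preadditive C] [CategoryTheory.Linear R C]
  [HasZeroObject C] [HasShift C ℤ] [∀ n : ℤ, (shiftFunctor C n).Additive]
  [Pretriangulated C] [HasFiniteBiproducts C]

attribute [local instance] CategoryTheory.Limits.hasBinaryBiproducts_of_finite_biproducts

lemma not_isZero_shift {Z : C} (hZ : ¬ IsZero Z) : ¬ IsZero (Z⟦(-1 : ℤ)⟧) := by
  intro hz
  apply hZ
  have hz2 : IsZero ((Z⟦(-1:ℤ)⟧)⟦(1:ℤ)⟧) := by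
    rw [IsZero.iff_id_eq_zero] at hz ⊢
    have hid : (𝟙 (Z⟦(-1:ℤ)⟧))⟦(1:ℤ)⟧' = 𝟙 ((Z⟦(-1:ℤ)⟧)⟦(1:ℤ)⟧) :=
      CategoryTheory.Functor.map_id _ _
    rw [← hid, hz, Functor.map_zero]
  exact hz2.of_iso ((shiftFunctorCompIsoId C (-1:ℤ) (1:ℤ) (neg_add_cancel 1)).app Z).symm

lemma ar_vanish (hKS : KrullSchmidt C) {T : Triangle C} (hT : IsARTriangle C T)
    {Y : C} (hY : Indecomposable Y) (h1 : ¬ Nonempty (Y ≅ T.obj₃))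
    (h2 : ¬ Nonempty (Y ≅ (T.obj₃⟦(-1 : ℤ)⟧))) :
    mlen R (Y ⟶ T.obj₂) = mlen R (Y ⟶ T.obj₁) + mlen R (Y ⟶ T.obj₃) := by
  obtain ⟨hdist, hA, hC, hm3, hfac⟩ := hT
  have hCnz : ¬ IsZero T.obj₃ := hC.1
  have hnse : ∀ t : Y ⟶ T.obj₃, ¬ IsSplitEpi t := by
    intro t ht
    obtain ⟨se⟩ := ht.exists_splitEpi
    exact h1 (nonempty_iso_of_splitEpi hKS hY hCnz t se.section_ se.id)
  have hCnz' : ¬ IsZero (T.obj₃⟦(-1:ℤ)⟧) := not_isZero_shift hCnz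
  have hnse2 : ∀ t : (Y⟦(1:ℤ)⟧) ⟶ T.obj₃, ¬ IsSplitEpi t := by
    intro t ht
    obtain ⟨se⟩ := ht.exists_splitEpi
    set κ := shiftFunctorCompIsoId C (1:ℤ) (-1:ℤ) (add_neg_cancel 1) with hκ
    refine h2 (nonempty_iso_of_splitEpi hKS hY hCnz'
      (κ.inv.app Y ≫ t⟦(-1:ℤ)⟧') (se.section_⟦(-1:ℤ)⟧' ≫ κ.hom.app Y) ?_)
    rw [Category.assoc, Iso.hom_inv_id_app_assoc, ← Functor.map_comp, se.id,
      CategoryTheory.Functor.map_id]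
  have hsur : Function.Surjective (Linear.rightComp R Y T.mor₂) := by
    intro t
    obtain ⟨t', ht'⟩ := hfac t (hnse t)
    exact ⟨t', by simpa using ht'⟩
  have hker : LinearMap.ker (Linear.rightComp R Y T.mor₂)
      = LinearMap.range (Linear.rightComp R Y T.mor₁) := by
    ext u
    simp only [LinearMap.mem_ker, LinearMap.mem_range, Linear.rightComp_apply]
    constructor
    · intro h
      obtain ⟨g, hg⟩ := Pretriangulated.Triangle.coyoneda_exact₂ T hdist u h
      exact ⟨g, hg.symm⟩
    · rintro ⟨g, rfl⟩
      rw [Category.assoc, Pretriangulated.comp_distTriang_mor_zero₁₂ T hdist, comp_zero]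
  have key : ∀ v : Y ⟶ (T.obj₃⟦(-1:ℤ)⟧), v ≫ T.mor₃⟦(-1:ℤ)⟧' = 0 := by
    intro v
    set ι := shiftFunctorCompIsoId C (-1:ℤ) (1:ℤ) (neg_add_cancel 1) with hι
    set t : Y⟦(1:ℤ)⟧ ⟶ T.obj₃ := v⟦(1:ℤ)⟧' ≫ ι.hom.app T.obj₃ with ht
    obtain ⟨w, hw⟩ := hfac t (hnse2 t)
    have h0 : t ≫ T.mor₃ = 0 := by
      rw [← hw, Category.assoc, Pretriangulated.comp_distTriang_mor_zero₂₃ T hdist, comp_zero]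
    have h1' : (v⟦(1:ℤ)⟧' ≫ (T.mor₃⟦(-1:ℤ)⟧')⟦(1:ℤ)⟧') ≫ ι.hom.app (T.obj₁⟦(1:ℤ)⟧) = 0 := by
      have hnat : (T.mor₃⟦(-1:ℤ)⟧')⟦(1:ℤ)⟧' ≫ ι.hom.app (T.obj₁⟦(1:ℤ)⟧)
          = ι.hom.app T.obj₃ ≫ T.mor₃ := ι.hom.naturality T.mor₃
      rw [Category.assoc, hnat, ← Category.assoc]
      exact h0
    have h2' : v⟦(1:ℤ)⟧' ≫ (T.mor₃⟦(-1:ℤ)⟧')⟦(1:ℤ)⟧' = 0 := by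
      refine (cancel_mono (ι.hom.app (T.obj₁⟦(1:ℤ)⟧))).mp ?_
      rw [zero_comp]
      exact h1'
    apply (shiftFunctor C (1:ℤ)).map_injective
    rw [Functor.map_comp, Functor.map_zero]
    exact h2'
  have hinj : Function.Injective (Linear.rightComp R Y T.mor₁) := by
    have hz : ∀ u : Y ⟶ T.obj₁, u ≫ T.mor₁ = 0 → u = 0 := by
      intro u hu
      obtain ⟨v, hv⟩ := Pretriangulated.Triangle.coyoneda_exact₂ T.invRotate
        (Pretriangulated.inv_rot_of_distTriang T hdist) u (by exact hu)
      rw [hv]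
      have : v ≫ (CategoryTheory.Pretriangulated.Triangle.invRotate T).mor₁ = 0 := by
        erw [CategoryTheory.Pretriangulated.Triangle.invRotate_mor₁,
          Preadditive.comp_neg, ← Category.assoc, key v, zero_comp, neg_zero]
      exact this
    intro a b hab
    simp only [Linear.rightComp_apply] at hab
    have : (a - b) ≫ T.mor₁ = 0 := by
      rw [Preadditive.sub_comp, hab, sub_self]
    have := hz _ this
    exact sub_eq_zero.mp this
  exact mlen_eq_of_exact _ _ hinj hsur hker

end Vanish

/-- If the Auslander-Reiten triangles generate the relations for the Grothendieck group
of a Hom-finite Krull-Schmidt `R`-linear triangulated category which admits an object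
`X` with `Hom(Y,X) ≠ 0` for all non-zero `Y`, then the category has only finitely many
isomorphism classes of indecomposable objects. -/
theorem finite_indecomposables_of_ar_generate_relations
    (hfin : HomFinite C R) (hKS : KrullSchmidt C)
    (hEx : ExSubgroup C = ARSubgroup C)
    (hX : ∃ X : C, ∀ Y : C, ¬ IsZero Y → ∃ f : Y ⟶ X, f ≠ 0) :
    ∃ L : List C, ∀ U : C, Indecomposable U → ∃ V ∈ L, Nonempty (U ≅ V) := by
  classical
  obtain ⟨X, hXp⟩ := hX
  haveI : HasBinaryBiproducts C :=
    CategoryTheory.Limits.hasBinaryBiproducts_of_finite_biproducts C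
  set e0 : K0 C := cls C X + cls C (X⟦(1:ℤ)⟧) with he0
  have heEx : e0 ∈ ExSubgroup C := by
    apply AddSubgroup.subset_closure
    refine ⟨(contractibleTriangle X).rotate,
      Pretriangulated.rot_of_distTriang _ (Pretriangulated.contractible_distinguished X), ?_⟩
    have hz : cls C ((contractibleTriangle X).rotate.obj₂) = 0 :=
      cls_isZero (isZero_zero C)
    show e0 = cls C X - cls C ((contractibleTriangle X).rotate.obj₂) + cls C (X⟦(1:ℤ)⟧)
    rw [hz, sub_zero, he0]
  rw [hEx] at heEx
  have main : ∀ x : K0 C, x ∈ ARSubgroup C → ∃ L : List C, ∀ Y : C, Indecomposable Y →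
      (∀ V ∈ L, ¬ Nonempty (Y ≅ V)) → phiK R hfin Y x = 0 := by
    intro x hx
    refine AddSubgroup.closure_induction
      (p := fun y _ => ∃ L : List C, ∀ Y : C, Indecomposable Y →
        (∀ V ∈ L, ¬ Nonempty (Y ≅ V)) → phiK R hfin Y y = 0) ?_ ?_ ?_ ?_ hx
    · rintro y ⟨T, hT, rfl⟩
      refine ⟨[T.obj₃, T.obj₃⟦(-1:ℤ)⟧], fun Y hY havoid => ?_⟩
      have h1 : ¬ Nonempty (Y ≅ T.obj₃) := havoid _ (by simp)
      have h2 : ¬ Nonempty (Y ≅ (T.obj₃⟦(-1:ℤ)⟧)) := havoid _ (by simp)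
      have hv := ar_vanish (R := R) hKS hT hY h1 h2
      rw [map_add, map_sub, phiK_cls, phiK_cls, phiK_cls]
      have fA : mlen R (Y ⟶ T.obj₁) ≠ ⊤ := mlen_ne_top_of_isFiniteLength (hfin Y T.obj₁)
      have fC : mlen R (Y ⟶ T.obj₃) ≠ ⊤ := mlen_ne_top_of_isFiniteLength (hfin Y T.obj₃)
      have hnat : nhlen R Y T.obj₂ = nhlen R Y T.obj₁ + nhlen R Y T.obj₃ := by
        unfold nhlen
        rw [hv, ENat.toNat_add fA fC]
      omega
    · exact ⟨[], fun Y _ _ => map_zero _⟩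
    · rintro y z _ _ ⟨L₁, hL₁⟩ ⟨L₂, hL₂⟩
      refine ⟨L₁ ++ L₂, fun Y hY havoid => ?_⟩
      rw [map_add, hL₁ Y hY (fun V hV => havoid V (List.mem_append_left _ hV)),
        hL₂ Y hY (fun V hV => havoid V (List.mem_append_right _ hV)), add_zero]
    · rintro y _ ⟨L, hL⟩
      exact ⟨L, fun Y hY havoid => by rw [map_neg, hL Y hY havoid, neg_zero]⟩
  obtain ⟨L, hL⟩ := main e0 heEx
  refine ⟨L, fun U hU => ?_⟩
  by_contra hc
  simp only [not_exists, not_and] at hc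
  have h0 := hL U hU hc
  rw [he0, map_add, phiK_cls, phiK_cls] at h0
  have hne : ¬ Subsingleton (U ⟶ X) := by
    obtain ⟨f, hf⟩ := hXp U (fun hz => hU.1 hz)
    intro hs
    exact hf (Subsingleton.elim f 0)
  have h1 : 1 ≤ mlen R (U ⟶ X) := one_le_mlen_of_nontrivial hne
  have hA : mlen R (U ⟶ X) ≠ ⊤ := mlen_ne_top_of_isFiniteLength (hfin U X)
  have h2 : 1 ≤ nhlen R U X := by
    unfold nhlen
    rw [ENat.one_le_iff_ne_zero] at h1
    have hz : (mlen R (U ⟶ X)).toNat ≠ 0 := by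
      rw [Ne, ENat.toNat_eq_zero]
      push_neg
      exact ⟨h1, hA⟩
    omega
  omega
end

section
/- Let C be an essentially small R-linear Frobenius exact category whose stable category is Hom-finite, and suppose C is Krull-Schmidt. If the subgroup Ex(C) of K₀(C,0) generated by [X] − [Y] + [Z] over all short exact sequences 0 → X → Y → Z → 0 equals the subgroup AR(C) generated by such elements from Auslander-Reiten sequences, then in the stable category C̄ one has Ex(C̄) = AR(C̄) in K₀(C̄,0). -/
open CategoryTheory CategoryTheory.Limits CategoryTheory.Pretriangulated

universe v u

universe v₂ u₂

section Frobenius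

variable {C : Type u} [Category.{v} C] [Preadditive C]

/-- `S.f` is a kernel of `S.g` and `S.g` is a cokernel of `S.f`. -/
def IsKernelCokernelPair (S : ShortComplex C) : Prop :=
  Mono S.f ∧ Epi S.g ∧
    Nonempty (IsLimit (KernelFork.ofι S.f S.zero)) ∧
    Nonempty (IsColimit (CokernelCofork.ofπ S.g S.zero))

/-- `f` is an admissible monomorphism for a class `E` of conflations. -/
def AdmMonoOf (E : Set (ShortComplex C)) {X Y : C} (f : X ⟶ Y) : Prop :=
  ∃ (Z : C) (g : Y ⟶ Z) (w : f ≫ g = 0), ShortComplex.mk f g w ∈ E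

/-- `g` is an admissible epimorphism for a class `E` of conflations. -/
def AdmEpiOf (E : Set (ShortComplex C)) {Y Z : C} (g : Y ⟶ Z) : Prop :=
  ∃ (X : C) (f : X ⟶ Y) (w : f ≫ g = 0), ShortComplex.mk f g w ∈ E

/-- A Quillen exact structure on an additive category: a class of conflations
(kernel-cokernel pairs) closed under isomorphism, containing the split exact
sequences, with admissible monomorphisms and epimorphisms closed under composition,
and admissible monomorphisms (resp. epimorphisms) stable under pushout
(resp. pullback) along arbitrary morphisms. -/
structure ExactStructure (C : Type u) [Category.{v} C] [Preadditive C]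
    [HasBinaryBiproducts C] where
  conflations : Set (ShortComplex C)
  ker_coker : ∀ S ∈ conflations, IsKernelCokernelPair S
  iso_closed : ∀ S₁ ∈ conflations, ∀ S₂ : ShortComplex C,
    Nonempty (S₂ ≅ S₁) → S₂ ∈ conflations
  split_mem : ∀ X Y : C,
    ShortComplex.mk (biprod.inl : X ⟶ X ⊞ Y) (biprod.snd : X ⊞ Y ⟶ Y) (by simp) ∈
      conflations
  admMono_comp : ∀ {X Y Z : C} (f : X ⟶ Y) (g : Y ⟶ Z),
    AdmMonoOf conflations f → AdmMonoOf conflations g → AdmMonoOf conflations (f ≫ g)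
  admEpi_comp : ∀ {X Y Z : C} (f : X ⟶ Y) (g : Y ⟶ Z),
    AdmEpiOf conflations f → AdmEpiOf conflations g → AdmEpiOf conflations (f ≫ g)
  pushout_admMono : ∀ {X Y X' : C} (f : X ⟶ Y) (u : X ⟶ X'), AdmMonoOf conflations f →
    ∃ (P : C) (fst : Y ⟶ P) (snd : X' ⟶ P),
      IsPushout f u fst snd ∧ AdmMonoOf conflations snd
  pullback_admEpi : ∀ {Y Z Z' : C} (g : Y ⟶ Z) (v : Z' ⟶ Z), AdmEpiOf conflations g →
    ∃ (P : C) (fst : P ⟶ Y) (snd : P ⟶ Z'),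
      IsPullback fst snd g v ∧ AdmEpiOf conflations snd

variable [HasBinaryBiproducts C]

/-- Projectivity relative to an exact structure. -/
def EProjective (E : ExactStructure C) (P : C) : Prop :=
  ∀ S ∈ E.conflations, ∀ t : P ⟶ S.X₃, ∃ t' : P ⟶ S.X₂, t' ≫ S.g = t

/-- Injectivity relative to an exact structure. -/
def EInjective (E : ExactStructure C) (I : C) : Prop :=
  ∀ S ∈ E.conflations, ∀ t : S.X₁ ⟶ I, ∃ t' : S.X₂ ⟶ I, S.f ≫ t' = t

/-- A Frobenius category: enough projectives and injectives, and these coincide. -/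
structure IsFrobenius (E : ExactStructure C) : Prop where
  enough_proj : ∀ X : C, ∃ S ∈ E.conflations, S.X₃ = X ∧ EProjective E S.X₂
  enough_inj : ∀ X : C, ∃ S ∈ E.conflations, S.X₁ = X ∧ EInjective E S.X₂
  proj_iff_inj : ∀ X : C, EProjective E X ↔ EInjective E X

/-- An Auslander-Reiten sequence: a non-split conflation with indecomposable end
terms such that every non-split-epimorphism into the third term factors through `g`. -/
def IsARSequence (E : ExactStructure C) (S : ShortComplex C) : Prop :=
  S ∈ E.conflations ∧ Indecomposable S.X₁ ∧ Indecomposable S.X₃ ∧ ¬ IsSplitEpi S.g ∧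
    ∀ ⦃W : C⦄ (t : W ⟶ S.X₃), ¬ IsSplitEpi t → ∃ t' : W ⟶ S.X₂, t' ≫ S.g = t

/-- The subgroup `Ex(C)` of `K₀(C,0)` generated by the conflations. -/
noncomputable def ExSubgroupE (E : ExactStructure C) : AddSubgroup (K0 C) :=
  AddSubgroup.closure {x | ∃ S ∈ E.conflations, x = cls C S.X₁ - cls C S.X₂ + cls C S.X₃}

/-- The subgroup `AR(C)` of `K₀(C,0)` generated by the Auslander-Reiten sequences. -/
noncomputable def ARSubgroupE (E : ExactStructure C) : AddSubgroup (K0 C) :=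
  AddSubgroup.closure {x | ∃ S, IsARSequence E S ∧ x = cls C S.X₁ - cls C S.X₂ + cls C S.X₃}

/-- Data exhibiting a triangulated category `D` as the stable category of a Frobenius
category `C` with exact structure `E`: a full additive essentially surjective functor
`π` whose vanishing ideal consists of the morphisms factoring through a projective,
such that the conflations of `C` correspond to the distinguished triangles of `D`
(the shift `⟦1⟧` of `D` playing the role of the cosyzygy functor `Ω⁻¹`). -/
structure StableModel (E : ExactStructure C) (D : Type u₂) [Category.{v₂} D]
    [Preadditive D] [HasZeroObject D] [HasShift D ℤ]
    [∀ n : ℤ, (shiftFunctor D n).Additive] [Pretriangulated D] where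
  π : C ⥤ D
  additive : π.Additive
  full : ∀ {X Y : C} (g : π.obj X ⟶ π.obj Y), ∃ f : X ⟶ Y, π.map f = g
  surj_obj : ∀ d : D, ∃ X : C, Nonempty (d ≅ π.obj X)
  map_eq_zero_iff : ∀ {X Y : C} (f : X ⟶ Y), π.map f = 0 ↔
    ∃ (P : C) (_ : EProjective E P) (a : X ⟶ P) (b : P ⟶ Y), a ≫ b = f
  ses_triangle : ∀ S ∈ E.conflations,
    ∃ h : π.obj S.X₃ ⟶ (π.obj S.X₁)⟦(1 : ℤ)⟧,
      Triangle.mk (π.map S.f) (π.map S.g) h ∈ distTriang D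
  triangle_ses : ∀ T ∈ distTriang D, ∃ S ∈ E.conflations,
    ∃ h : π.obj S.X₃ ⟶ (π.obj S.X₁)⟦(1 : ℤ)⟧,
      Nonempty (T ≅ Triangle.mk (π.map S.f) (π.map S.g) h)

end Frobenius

universe w

variable {R : Type w} [CommRing R]
variable {C : Type u} [Category.{v} C] [Preadditive C] [CategoryTheory.Linear R C]
  [HasBinaryBiproducts C] [HasFiniteBiproducts C] [EssentiallySmall.{v} C]
variable {D : Type u₂} [Category.{v₂} D] [Preadditive D] [CategoryTheory.Linear R D]
  [HasZeroObject D] [HasShift D ℤ] [∀ n : ℤ, (shiftFunctor D n).Additive]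
  [Pretriangulated D] [HasBinaryBiproducts D] [EssentiallySmall.{v₂} D]

section AuxLemmas

theorem my_cls_congr {A : Type u} [Category.{v} A] [Preadditive A] [HasBinaryBiproducts A]
    {X Y : A} (e : X ≅ Y) : cls A X = cls A Y := by
  have hq : Quotient.mk (isIsomorphicSetoid A) X = Quotient.mk (isIsomorphicSetoid A) Y :=
    Quotient.sound ⟨e⟩
  unfold cls
  rw [hq]

/-- An additive functor preserves binary biproducts, explicitly. -/
noncomputable def myMapBiprod {A : Type u} {B : Type u₂} [Category.{v} A] [Category.{v₂} B]
    [Preadditive A] [Preadditive B] [HasBinaryBiproducts A] [HasBinaryBiproducts B]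
    (F : A ⥤ B) [F.Additive] (X Y : A) :
    F.obj (X ⊞ Y) ≅ F.obj X ⊞ F.obj Y where
  hom := biprod.lift (F.map biprod.fst) (F.map biprod.snd)
  inv := biprod.desc (F.map biprod.inl) (F.map biprod.inr)
  hom_inv_id := by
    rw [biprod.lift_desc, ← Functor.map_comp, ← Functor.map_comp, ← Functor.map_add,
      biprod.total]
    exact F.map_id _
  inv_hom_id := by
    apply biprod.hom_ext' <;> apply biprod.hom_ext <;>
      simp [← Functor.map_comp]

noncomputable def myObjMap {A : Type u} {B : Type u₂} [Category.{v} A] [Category.{v₂} B]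
    (F : A ⥤ B) : Quotient (isIsomorphicSetoid A) → Quotient (isIsomorphicSetoid B) :=
  Quotient.lift (fun X => Quotient.mk (isIsomorphicSetoid B) (F.obj X))
    (fun _ _ h => Nonempty.elim h (fun e => Quotient.sound ⟨F.mapIso e⟩))

noncomputable def myFreeMap {A : Type u} {B : Type u₂} [Category.{v} A] [Category.{v₂} B]
    [Preadditive A] [Preadditive B] [HasBinaryBiproducts A] [HasBinaryBiproducts B]
    (F : A ⥤ B) : FreeK0 A →+ FreeK0 B :=
  FreeAbelianGroup.map (myObjMap F)

/-- The group homomorphism `K₀(A,0) →+ K₀(B,0)` induced by an additive functor. -/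
noncomputable def myK0Map {A : Type u} {B : Type u₂} [Category.{v} A] [Category.{v₂} B]
    [Preadditive A] [Preadditive B] [HasBinaryBiproducts A] [HasBinaryBiproducts B]
    (F : A ⥤ B) (hF : F.Additive) : K0 A →+ K0 B :=
  QuotientAddGroup.lift (splitSubgroup A)
    ((QuotientAddGroup.mk' (splitSubgroup B)).comp (myFreeMap F))
    (by
      haveI := hF
      intro x hx
      have hle : splitSubgroup A ≤
          ((QuotientAddGroup.mk' (splitSubgroup B)).comp (myFreeMap F)).ker := by
        refine (AddSubgroup.closure_le _).2 ?_
        rintro y ⟨X, Y, rfl⟩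
        show QuotientAddGroup.mk' (splitSubgroup B) (myFreeMap F
          (HSub.hSub (α := FreeK0 A) (β := FreeK0 A) (γ := FreeK0 A)
            (HSub.hSub (α := FreeK0 A) (β := FreeK0 A) (γ := FreeK0 A)
              (FreeAbelianGroup.of (Quotient.mk (isIsomorphicSetoid A) (X ⊞ Y)))
              (FreeAbelianGroup.of (Quotient.mk (isIsomorphicSetoid A) X)))
            (FreeAbelianGroup.of (Quotient.mk (isIsomorphicSetoid A) Y)))) = 0
        erw [map_sub, map_sub, map_sub, map_sub]
        have h1 : myFreeMap F (FreeAbelianGroup.of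
            (Quotient.mk (isIsomorphicSetoid A) (X ⊞ Y)))
            = FreeAbelianGroup.of (Quotient.mk (isIsomorphicSetoid B) (F.obj X ⊞ F.obj Y)) :=
          congrArg FreeAbelianGroup.of (Quotient.sound ⟨myMapBiprod F X Y⟩)
        have h2 : ∀ Z : A, myFreeMap F (FreeAbelianGroup.of
            (Quotient.mk (isIsomorphicSetoid A) Z))
            = FreeAbelianGroup.of (Quotient.mk (isIsomorphicSetoid B) (F.obj Z)) :=
          fun Z => rfl
        rw [h1, h2, h2]
        erw [← map_sub, ← map_sub]
        exact (QuotientAddGroup.eq_zero_iff _).2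
          (AddSubgroup.subset_closure ⟨F.obj X, F.obj Y, rfl⟩)
      exact hle hx)

theorem myK0Map_cls {A : Type u} {B : Type u₂} [Category.{v} A] [Category.{v₂} B]
    [Preadditive A] [Preadditive B] [HasBinaryBiproducts A] [HasBinaryBiproducts B]
    (F : A ⥤ B) (hF : F.Additive) (X : A) :
    myK0Map F hF (cls A X) = cls B (F.obj X) := rfl

theorem my_isLocalRing_end_of_iso {A : Type u} [Category.{v} A] [Preadditive A]
    {X Y : A} (e : X ≅ Y) (h : IsLocalRing (End Y)) : IsLocalRing (End X) := by
  haveI : Nontrivial (End X) := by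
    refine ⟨1, 0, fun h10 => ?_⟩
    have h1Y : (1 : End Y) = 0 := by
      have h1 : (𝟙 Y : End Y) = e.inv ≫ (𝟙 X) ≫ e.hom := by simp
      calc (1 : End Y) = e.inv ≫ (𝟙 X) ≫ e.hom := h1
        _ = e.inv ≫ (0 : X ⟶ X) ≫ e.hom := by rw [show (𝟙 X : X ⟶ X) = 0 from h10]
        _ = 0 := by simp
    exact one_ne_zero h1Y
  refine ⟨fun {a b} hab => ?_⟩
  have hsum : e.conj a + e.conj b = 1 := by
    rw [Iso.conj_apply, Iso.conj_apply, ← Preadditive.comp_add, ← Preadditive.add_comp]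
    have hab' : a + b = 𝟙 X := hab
    rw [hab']; simp
  rcases h.isUnit_or_isUnit_of_add_one hsum with hu | hu
  · left; simpa using hu.map e.conj.symm
  · right; simpa using hu.map e.conj.symm

theorem my_indec_map {A : Type u} {B : Type u₂} [Category.{v} A] [Category.{v₂} B]
    [Preadditive A] [Preadditive B] [HasBinaryBiproducts B]
    (F : A ⥤ B) (hF : F.Additive)
    (hfull : ∀ {X Y : A} (g : F.obj X ⟶ F.obj Y), ∃ f : X ⟶ Y, F.map f = g)
    {X : A} (hloc : IsLocalRing (End X)) (hnz : ¬ IsZero (F.obj X)) :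
    Indecomposable (F.obj X) := by
  haveI := hF
  refine ⟨hnz, fun Y Z φ => ?_⟩
  set e : F.obj X ⟶ F.obj X := φ.hom ≫ biprod.fst ≫ biprod.inl ≫ φ.inv with he
  have hee : e ≫ e = e := by
    simp only [he, Category.assoc, Iso.inv_hom_id_assoc, biprod.inl_fst_assoc]
  obtain ⟨eb0, heb⟩ := hfull e
  let eb : End X := eb0
  have hsum : eb + (1 - eb) = 1 := by abel
  have key : e = 𝟙 (F.obj X) ∨ e = 0 := by
    rcases hloc.isUnit_or_isUnit_of_add_one hsum with hu | hu
    · left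
      haveI : IsIso (eb : X ⟶ X) := (isUnit_iff_isIso _).1 hu
      haveI : IsIso e := by
        rw [← heb]; infer_instance
      refine (cancel_epi e).1 ?_
      rw [hee, Category.comp_id]
    · right
      haveI : IsIso ((1 - eb : End X) : X ⟶ X) := (isUnit_iff_isIso _).1 hu
      have h1e : F.map ((1 - eb : End X) : X ⟶ X) = 𝟙 (F.obj X) - e := by
        show F.map (𝟙 X - eb0) = 𝟙 (F.obj X) - e
        rw [Functor.map_sub, heb]
        congr 1
        exact F.map_id X
      haveI : IsIso (𝟙 (F.obj X) - e) := by
        rw [← h1e]; infer_instance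
      have hee' : (𝟙 (F.obj X) - e) ≫ (𝟙 (F.obj X) - e) = 𝟙 (F.obj X) - e := by
        simp only [Preadditive.sub_comp, Preadditive.comp_sub, Category.id_comp,
          Category.comp_id, hee]
        abel
      have h1 : (𝟙 (F.obj X) - e) = 𝟙 (F.obj X) := by
        refine (cancel_epi (𝟙 (F.obj X) - e)).1 ?_
        rw [hee', Category.comp_id]
      exact sub_eq_self.1 h1
  rcases key with hk | hk
  · right
    have hfi : (biprod.fst ≫ biprod.inl : Y ⊞ Z ⟶ Y ⊞ Z) = 𝟙 _ := by
      have := congrArg (fun m => φ.inv ≫ m ≫ φ.hom) hk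
      simpa [he] using this
    have hinr : (biprod.inr : Z ⟶ Y ⊞ Z) = 0 := by
      calc (biprod.inr : Z ⟶ Y ⊞ Z) = biprod.inr ≫ 𝟙 _ := by simp
        _ = biprod.inr ≫ biprod.fst ≫ biprod.inl := by rw [hfi]
        _ = 0 := by simp
    refine (IsZero.iff_id_eq_zero Z).2 ?_
    calc 𝟙 Z = biprod.inr ≫ biprod.snd := by simp
      _ = 0 := by rw [hinr]; simp
  · left
    have hfi : (biprod.fst ≫ biprod.inl : Y ⊞ Z ⟶ Y ⊞ Z) = 0 := by
      have := congrArg (fun m => φ.inv ≫ m ≫ φ.hom) hk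
      simpa [he] using this
    have hinl : (biprod.inl : Y ⟶ Y ⊞ Z) = 0 := by
      calc (biprod.inl : Y ⟶ Y ⊞ Z) = biprod.inl ≫ biprod.fst ≫ biprod.inl := by simp
        _ = biprod.inl ≫ (0 : Y ⊞ Z ⟶ Y ⊞ Z) := by rw [hfi]
        _ = 0 := by simp
    refine (IsZero.iff_id_eq_zero Y).2 ?_
    calc 𝟙 Y = biprod.inl ≫ biprod.fst := by simp
      _ = 0 := by rw [hinl]; simp

/-- Splitting off the first summand of a biproduct over `Fin (n+1)`. -/
noncomputable def myBiprodSplit {A : Type u} [Category.{v} A] [Preadditive A]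
    [HasBinaryBiproducts A] [HasFiniteBiproducts A] {n : ℕ} (f : Fin (n + 1) → A) :
    (⨁ f) ≅ f 0 ⊞ ⨁ (fun j : Fin n => f j.succ) where
  hom := biprod.lift (biproduct.π f 0) (biproduct.lift (fun j => biproduct.π f j.succ))
  inv := biprod.desc (biproduct.ι f 0) (biproduct.desc (fun j => biproduct.ι f j.succ))
  hom_inv_id := by
    rw [biprod.lift_desc, biproduct.lift_desc, ← biproduct.total, Fin.sum_univ_succ]
  inv_hom_id := by
    apply biprod.hom_ext' <;> apply biprod.hom_ext
    · simp
    · apply biproduct.hom_ext; intro j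
      simp [biproduct.ι_π_ne f (Fin.succ_ne_zero j).symm]
    · apply biproduct.hom_ext'; intro j
      simp [biproduct.ι_π_ne f (Fin.succ_ne_zero j)]
    · apply biproduct.hom_ext'; intro j; apply biproduct.hom_ext; intro k
      by_cases h : j = k
      · subst h; simp
      · simp [biproduct.ι_π_ne f (fun hh => h (Fin.succ_injective _ hh)),
          biproduct.ι_π_ne _ h]

noncomputable def myBiprodOne {A : Type u} [Category.{v} A] [Preadditive A]
    [HasFiniteBiproducts A] (f : Fin 1 → A) : (⨁ f) ≅ f 0 where
  hom := biproduct.π f 0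
  inv := biproduct.ι f 0
  hom_inv_id := by
    apply biproduct.hom_ext'; intro j; apply biproduct.hom_ext; intro k
    have hj : j = 0 := Subsingleton.elim _ _
    have hk : k = 0 := Subsingleton.elim _ _
    subst hj; subst hk; simp
  inv_hom_id := by simp

theorem my_endLocal {A : Type u} [Category.{v} A] [Preadditive A] [HasBinaryBiproducts A]
    [HasFiniteBiproducts A] (hKS : KrullSchmidt A) {X : A}
    (hX : Indecomposable X) : IsLocalRing (End X) := by
  obtain ⟨n, f, ⟨φ⟩, hloc⟩ := hKS X
  have hnz : ∀ i, ¬ IsZero (f i) := by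
    intro i hz
    haveI := hloc i
    exact one_ne_zero (α := End (f i)) ((IsZero.iff_id_eq_zero (f i)).1 hz)
  match n, f, φ, hloc, hnz with
  | 0, f, φ, hloc, hnz =>
    exact absurd (IsZero.of_iso ((IsZero.iff_id_eq_zero _).2
      (biproduct.hom_ext _ _ (fun j => j.elim0))) φ) hX.1
  | 1, f, φ, hloc, hnz =>
    exact my_isLocalRing_end_of_iso (φ ≪≫ myBiprodOne f) (hloc 0)
  | (m + 2), f, φ, hloc, hnz =>
    rcases hX.2 _ _ (φ ≪≫ myBiprodSplit f) with hz | hz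
    · exact absurd hz (hnz 0)
    · refine absurd ?_ (hnz 1)
      have h0 : 𝟙 (⨁ fun j : Fin (m+1) => f j.succ) = 0 :=
        (IsZero.iff_id_eq_zero _).1 hz
      refine (IsZero.iff_id_eq_zero _).2 ?_
      have h1 : (𝟙 (f 1) : f 1 ⟶ f 1)
          = biproduct.ι (fun j : Fin (m+1) => f j.succ) 0 ≫ 𝟙 _ ≫ biproduct.π _ 0 := by
        rw [Category.id_comp, biproduct.ι_π_self]; rfl
      rw [h1, h0, zero_comp, comp_zero]; rfl

end AuxLemmas

section FrobAux

variable {C : Type u} [Category.{v} C] [Preadditive C] [HasBinaryBiproducts C]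
variable {D : Type u₂} [Category.{v₂} D] [Preadditive D]
  [HasZeroObject D] [HasShift D ℤ] [∀ n : ℤ, (shiftFunctor D n).Additive]
  [Pretriangulated D] [HasBinaryBiproducts D]

theorem my_proj_of_retract (E : ExactStructure C) {X P : C} (hP : EProjective E P)
    (a : X ⟶ P) (b : P ⟶ X) (hab : a ≫ b = 𝟙 X) : EProjective E X := by
  intro S hS t
  obtain ⟨t', ht'⟩ := hP S hS (b ≫ t)
  exact ⟨a ≫ t', by rw [Category.assoc, ht', ← Category.assoc, hab, Category.id_comp]⟩

theorem my_not_isZero (E : ExactStructure C) (M : StableModel E D) {X : C}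
    (hX : ¬ EProjective E X) : ¬ IsZero (M.π.obj X) := by
  intro hz
  have h0 : M.π.map (𝟙 X) = 0 := by
    rw [M.π.map_id]
    exact (IsZero.iff_id_eq_zero _).1 hz
  obtain ⟨P, hP, a, b, hab⟩ := (M.map_eq_zero_iff _).1 h0
  exact hX (my_proj_of_retract E hP a b hab)

theorem my_splitEpi_of_map (E : ExactStructure C) (M : StableModel E D)
    {S : ShortComplex C} (hS : S ∈ E.conflations)
    (hsplit : IsSplitEpi (M.π.map S.g)) : IsSplitEpi S.g := by
  haveI := M.additive
  obtain ⟨⟨s, hs⟩⟩ := hsplit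
  obtain ⟨s', hs'⟩ := M.full s
  have h0 : M.π.map (s' ≫ S.g - 𝟙 S.X₃) = 0 := by
    rw [Functor.map_sub, Functor.map_comp, hs', M.π.map_id, hs, sub_self]
  obtain ⟨P, hP, a, b, hab⟩ := (M.map_eq_zero_iff _).1 h0
  obtain ⟨c, hc⟩ := hP S hS b
  refine ⟨⟨⟨s' - a ≫ c, ?_⟩⟩⟩
  rw [Preadditive.sub_comp, Category.assoc, hc, hab]
  abel

theorem my_X3_not_proj (E : ExactStructure C) {S : ShortComplex C} (hS : S ∈ E.conflations)
    (hns : ¬ IsSplitEpi S.g) : ¬ EProjective E S.X₃ := by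
  intro h
  obtain ⟨t', ht'⟩ := h S hS (𝟙 S.X₃)
  exact hns ⟨⟨⟨t', ht'⟩⟩⟩

theorem my_X1_not_proj (E : ExactStructure C) (hFrob : IsFrobenius E) {S : ShortComplex C}
    (hS : S ∈ E.conflations) (hns : ¬ IsSplitEpi S.g) : ¬ EProjective E S.X₁ := by
  intro hproj
  have hinj : EInjective E S.X₁ := (hFrob.proj_iff_inj _).1 hproj
  obtain ⟨r, hr⟩ := hinj S hS (𝟙 S.X₁)
  obtain ⟨hmono, hepi, hker, ⟨hcoker⟩⟩ := E.ker_coker S hS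
  have hw : S.f ≫ (𝟙 S.X₂ - r ≫ S.f) = 0 := by
    rw [Preadditive.comp_sub, Category.comp_id, ← Category.assoc, hr, Category.id_comp,
      sub_self]
  obtain ⟨l, hl⟩ := CokernelCofork.IsColimit.desc' hcoker _ hw
  have hgl : S.g ≫ l = 𝟙 S.X₂ - r ≫ S.f := by simpa using hl
  have hlg : l ≫ S.g = 𝟙 S.X₃ := by
    haveI := hepi
    refine (cancel_epi S.g).1 ?_
    rw [← Category.assoc, hgl, Preadditive.sub_comp, Category.id_comp, Category.assoc,
      S.zero, comp_zero, sub_zero, Category.comp_id]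
  exact hns ⟨⟨⟨l, hlg⟩⟩⟩

theorem my_mor3_ne_zero (E : ExactStructure C) (M : StableModel E D)
    {S : ShortComplex C} (hS : S ∈ E.conflations) (hns : ¬ IsSplitEpi S.g)
    {h : M.π.obj S.X₃ ⟶ (M.π.obj S.X₁)⟦(1 : ℤ)⟧}
    (hT : Triangle.mk (M.π.map S.f) (M.π.map S.g) h ∈ distTriang D) : h ≠ 0 := by
  intro h0
  obtain ⟨s, hs⟩ := Triangle.coyoneda_exact₃ _ hT (𝟙 (M.π.obj S.X₃)) (by simp only [Triangle.mk_mor₃, h0]; exact comp_zero)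
  exact hns (my_splitEpi_of_map E M hS ⟨⟨⟨s, hs.symm⟩⟩⟩)

theorem my_ARtriangle [HasFiniteBiproducts C] (E : ExactStructure C) (hFrob : IsFrobenius E)
    (M : StableModel E D) (hKS : KrullSchmidt C) {S : ShortComplex C}
    (hAR : IsARSequence E S)
    {h : M.π.obj S.X₃ ⟶ (M.π.obj S.X₁)⟦(1 : ℤ)⟧}
    (hT : Triangle.mk (M.π.map S.f) (M.π.map S.g) h ∈ distTriang D) :
    IsARTriangle D (Triangle.mk (M.π.map S.f) (M.π.map S.g) h) := by
  obtain ⟨hS, hi1, hi3, hns, hfac⟩ := hAR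
  refine ⟨hT, ?_, ?_, my_mor3_ne_zero E M hS hns hT, ?_⟩
  · exact my_indec_map M.π M.additive M.full (my_endLocal hKS hi1)
      (my_not_isZero E M (my_X1_not_proj E hFrob hS hns))
  · exact my_indec_map M.π M.additive M.full (my_endLocal hKS hi3)
      (my_not_isZero E M (my_X3_not_proj E hS hns))
  · intro W t ht
    obtain ⟨X, ⟨ψ⟩⟩ := M.surj_obj W
    obtain ⟨u', hu'⟩ := M.full (ψ.inv ≫ t)
    have hns' : ¬ IsSplitEpi u' := by
      intro hsplit
      obtain ⟨⟨r, hr⟩⟩ := hsplit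
      refine ht ⟨⟨⟨M.π.map r ≫ ψ.inv, ?_⟩⟩⟩
      show (M.π.map r ≫ ψ.inv) ≫ t = 𝟙 _
      have h' := congrArg M.π.map hr
      rw [Functor.map_comp, hu', M.π.map_id] at h'
      rw [Category.assoc]; exact h'
    obtain ⟨u'', hu''⟩ := hfac u' hns'
    refine ⟨ψ.hom ≫ M.π.map u'', ?_⟩
    show (ψ.hom ≫ M.π.map u'') ≫ M.π.map S.g = t
    rw [Category.assoc, ← Functor.map_comp, hu'', hu']
    exact ψ.hom_inv_id_assoc t

end FrobAux

/-- If the Auslander-Reiten sequences generate the relations for the Grothendieck group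
of a Krull-Schmidt Frobenius category `C` with Hom-finite stable category, then the
Auslander-Reiten triangles generate the relations for the Grothendieck group of the
stable category. -/
theorem exSubgroup_eq_arSubgroup_of_frobenius
    (E : ExactStructure C) (hFrob : IsFrobenius E) (M : StableModel E D)
    (hKS : KrullSchmidt C) (hfin : HomFinite D R)
    (hEx : ExSubgroupE E = ARSubgroupE E) :
    ExSubgroup D = ARSubgroup D := by
  haveI := M.additive
  apply le_antisymm
  · unfold ExSubgroup
    refine (AddSubgroup.closure_le _).2 ?_
    rintro x ⟨T, hT, rfl⟩
    obtain ⟨S, hS, h, ⟨eT⟩⟩ := M.triangle_ses T hT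
    have h1 : cls D T.obj₁ = cls D (M.π.obj S.X₁) :=
      my_cls_congr ((Triangle.π₁ : Triangle D ⥤ D).mapIso eT)
    have h2 : cls D T.obj₂ = cls D (M.π.obj S.X₂) :=
      my_cls_congr ((Triangle.π₂ : Triangle D ⥤ D).mapIso eT)
    have h3 : cls D T.obj₃ = cls D (M.π.obj S.X₃) :=
      my_cls_congr ((Triangle.π₃ : Triangle D ⥤ D).mapIso eT)
    have hx : cls D T.obj₁ - cls D T.obj₂ + cls D T.obj₃
        = myK0Map M.π M.additive (cls C S.X₁ - cls C S.X₂ + cls C S.X₃) := by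
      rw [map_add, map_sub, myK0Map_cls, myK0Map_cls, myK0Map_cls, h1, h2, h3]
    rw [SetLike.mem_coe, hx]
    have hmem : cls C S.X₁ - cls C S.X₂ + cls C S.X₃ ∈ ARSubgroupE E := by
      rw [← hEx]
      exact AddSubgroup.subset_closure ⟨S, hS, rfl⟩
    have himg : ARSubgroupE E ≤ (ARSubgroup D).comap (myK0Map M.π M.additive) := by
      unfold ARSubgroupE
      refine (AddSubgroup.closure_le _).2 ?_
      rintro y ⟨S', hS', rfl⟩
      rw [SetLike.mem_coe, AddSubgroup.mem_comap, map_add, map_sub,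
        myK0Map_cls, myK0Map_cls, myK0Map_cls]
      obtain ⟨h', hT'⟩ := M.ses_triangle S' hS'.1
      exact AddSubgroup.subset_closure
        ⟨Triangle.mk (M.π.map S'.f) (M.π.map S'.g) h',
          my_ARtriangle E hFrob M hKS hS' hT', rfl⟩
    exact himg hmem
  · unfold ARSubgroup
    refine (AddSubgroup.closure_le _).2 ?_
    rintro x ⟨T, hT, rfl⟩
    exact AddSubgroup.subset_closure ⟨T, hT.1, rfl⟩
end
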